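/- Let m ≥ 1 and n ≥ 1 be integers. Let (A_k)_{k≥1} and, for i = 1, ..., m+1, (S_k^i)_{k≥1} be sequences of real numbers. Define τ^1_{l,p} = Σ_{k=l}^{p} A_k (with empty sums equal to 0), and recursively for i = 1, ..., m: D_0^i = 0; D_p^i = max over j ∈ {1,...,p} of ( Σ_{k=j}^{p} (S_k^i + S_k^{i+1}) − τ^i_{j+1,p} ) for p ≥ 1; and τ^{i+1}_{l,p} = τ^i_{l,p} + D_p^i − D_{l−1}^i for 2 ≤ l ≤ p+1. Then Σ_{i=1}^{m} D_n^i = max over integer tuples 1 ≤ j_1 ≤ j_2 ≤ ... ≤ j_m ≤ j_{m+1} = n of [ Σ_{i=1}^{m} ( Σ_{k=j_i}^{j_{i+1}} (S_k^i + S_k^{i+1}) ) − Σ_{k=j_1+1}^{n} A_k ]. -/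

import Mathlib

/-- The finite set of admissible index tuples `1 ≤ j₀ ≤ ⋯ ≤ j_m = p`. -/
def validT (m p : ℕ) : Finset (Fin (m + 1) → ℕ) :=
  (Fintype.piFinset fun _ => Finset.Icc 1 p).filter
    fun j => Monotone j ∧ 1 ≤ j 0 ∧ j (Fin.last m) = p

lemma mem_validT {m p : ℕ} {j : Fin (m + 1) → ℕ} :
    j ∈ validT m p ↔ Monotone j ∧ 1 ≤ j 0 ∧ j (Fin.last m) = p := by
  constructor
  · intro h
    exact (Finset.mem_filter.mp h).2
  · intro h
    refine Finset.mem_filter.mpr ⟨Fintype.mem_piFinset.mpr fun i => ?_, h⟩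
    exact Finset.mem_Icc.mpr ⟨h.2.1.trans (h.1 (Fin.zero_le i)),
      h.2.2 ▸ h.1 (Fin.le_last i)⟩

lemma validT_nonempty (m p : ℕ) (hp : 1 ≤ p) : (validT m p).Nonempty :=
  ⟨fun _ => p, mem_validT.mpr ⟨monotone_const, hp, rfl⟩⟩

/-- The objective functional on tuples. -/
noncomputable def Fm (S : ℕ → ℕ → ℝ) (A : ℕ → ℝ) (m p : ℕ) (j : Fin (m + 1) → ℕ) : ℝ :=
  (∑ i : Fin m, ∑ k ∈ Finset.Icc (j i.castSucc) (j i.succ),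
      (S (i.val + 1) k + S (i.val + 2) k))
    - ∑ k ∈ Finset.Icc (j 0 + 1) p, A k

lemma snoc_zero' {n : ℕ} (t : Fin (n + 1) → ℕ) (p : ℕ) :
    (Fin.snoc t p : Fin (n + 2) → ℕ) 0 = t 0 := by
  rw [show (0 : Fin (n + 2)) = Fin.castSucc 0 from rfl, Fin.snoc_castSucc]

lemma monotone_snoc {n : ℕ} {t : Fin (n + 1) → ℕ} (ht : Monotone t) {p : ℕ}
    (hp : t (Fin.last n) ≤ p) : Monotone (Fin.snoc t p : Fin (n + 2) → ℕ) := by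
  rw [Fin.monotone_iff_le_succ]
  intro i
  induction i using Fin.lastCases with
  | last => simpa [Fin.succ_last] using hp
  | cast i =>
      rw [Fin.succ_castSucc, Fin.snoc_castSucc, Fin.snoc_castSucc]
      exact ht (Fin.castSucc_le_succ i)

lemma Fm_snoc (S : ℕ → ℕ → ℝ) (A : ℕ → ℝ) {m p j : ℕ} (t : Fin (m + 1) → ℕ)
    (h0j : t 0 ≤ j) (hlast : t (Fin.last m) = j) (hjp : j ≤ p) :
    Fm S A (m + 1) p (Fin.snoc t p) =
      Fm S A m j t +
        ((∑ k ∈ Finset.Icc j p, (S (m + 1) k + S (m + 2) k))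
          - ∑ k ∈ Finset.Icc (j + 1) p, A k) := by
  unfold Fm
  rw [Fin.sum_univ_castSucc, snoc_zero']
  have hsum : ∀ i : Fin m,
      (∑ k ∈ Finset.Icc ((Fin.snoc t p : Fin (m + 2) → ℕ) i.castSucc.castSucc)
          ((Fin.snoc t p : Fin (m + 2) → ℕ) i.castSucc.succ),
        (S (i.val + 1) k + S (i.val + 2) k)) =
      ∑ k ∈ Finset.Icc (t i.castSucc) (t i.succ), (S (i.val + 1) k + S (i.val + 2) k) := by
    intro i
    rw [Fin.succ_castSucc, Fin.snoc_castSucc, Fin.snoc_castSucc]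
  have hlast' : (Fin.snoc t p : Fin (m + 2) → ℕ) (Fin.last m).castSucc = j := by
    rw [Fin.snoc_castSucc, hlast]
  have hlast'' : (Fin.snoc t p : Fin (m + 2) → ℕ) (Fin.last m).succ = p := by
    rw [Fin.succ_last, Fin.snoc_last]
  have hA : (∑ k ∈ Finset.Icc (t 0 + 1) p, A k)
      = (∑ k ∈ Finset.Icc (t 0 + 1) j, A k) + ∑ k ∈ Finset.Icc (j + 1) p, A k := by
    rw [Finset.Icc_add_one_left_eq_Ioc, Finset.Icc_add_one_left_eq_Ioc, Finset.Icc_add_one_left_eq_Ioc]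
    exact (Finset.sum_Ioc_consecutive A h0j hjp).symm
  simp only [Fin.coe_castSucc, Fin.val_last, hsum, hlast', hlast'']
  rw [hA]
  ring

theorem sum_sojourn_nonrecursive (m n : ℕ) (hm : 1 ≤ m) (hn : 1 ≤ n)
    (A : ℕ → ℝ) (S : ℕ → ℕ → ℝ) (D : ℕ → ℕ → ℝ) (τ : ℕ → ℕ → ℕ → ℝ)
    (hτ1 : ∀ l p, τ 1 l p = ∑ k ∈ Finset.Icc l p, A k)
    (hD0 : ∀ i ∈ Finset.Icc 1 m, D i 0 = 0)
    (hD : ∀ i ∈ Finset.Icc 1 m, ∀ p : ℕ, ∀ hp : 1 ≤ p,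
      D i p = (Finset.Icc 1 p).sup' (Finset.nonempty_Icc.mpr hp)
        (fun j => (∑ k ∈ Finset.Icc j p, (S i k + S (i + 1) k)) - τ i (j + 1) p))
    (hτrec : ∀ i ∈ Finset.Icc 1 m, ∀ l p : ℕ, 2 ≤ l → l ≤ p + 1 →
      τ (i + 1) l p = τ i l p + D i p - D i (l - 1)) :
    ∑ i ∈ Finset.Icc 1 m, D i n =
      sSup {x : ℝ | ∃ j : Fin (m + 1) → ℕ, Monotone j ∧ 1 ≤ j 0 ∧ j (Fin.last m) = n ∧
        x = (∑ i : Fin m, ∑ k ∈ Finset.Icc (j i.castSucc) (j i.succ),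
              (S (i.val + 1) k + S (i.val + 2) k))
          - ∑ k ∈ Finset.Icc (j 0 + 1) n, A k} := by
  -- telescoped expression for τ
  have telescope : ∀ i ≤ m, ∀ j p : ℕ, 1 ≤ j → j ≤ p →
      τ (i + 1) (j + 1) p = (∑ k ∈ Finset.Icc (j + 1) p, A k)
        + ∑ r ∈ Finset.Icc 1 i, D r p - ∑ r ∈ Finset.Icc 1 i, D r j := by
    intro i
    induction i with
    | zero => intro _ j p _ _; simp [hτ1]
    | succ i ih =>
        intro hi j p hj hjp
        have h1 : τ (i + 1 + 1) (j + 1) p = τ (i + 1) (j + 1) p + D (i + 1) p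
            - D (i + 1) (j + 1 - 1) :=
          hτrec (i + 1) (Finset.mem_Icc.mpr ⟨by omega, hi⟩) (j + 1) p (by omega) (by omega)
        have h2 : j + 1 - 1 = j := by omega
        rw [h1, h2, ih (by omega) j p hj hjp,
          Finset.sum_Icc_succ_top (by omega) (fun r => D r p),
          Finset.sum_Icc_succ_top (by omega) (fun r => D r j)]
        ring
  -- the main induction
  have main : ∀ m' ≤ m, ∀ p : ℕ, ∀ hp : 1 ≤ p,
      ∑ i ∈ Finset.Icc 1 m', D i p
        = (validT m' p).sup' (validT_nonempty m' p hp) (Fm S A m' p) := by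
    intro m'
    induction m' with
    | zero =>
        intro _ p hp
        have hval : ∀ t ∈ validT 0 p, Fm S A 0 p t = 0 := by
          intro t ht
          obtain ⟨hmono, h0, hl⟩ := mem_validT.mp ht
          have ht0 : t 0 = p := hl
          simp [Fm, ht0, Finset.Icc_eq_empty_of_lt (by omega : p < p + 1)]
        have h1 : (validT 0 p).sup' (validT_nonempty 0 p hp) (Fm S A 0 p) ≤ 0 :=
          Finset.sup'_le _ _ fun t ht => (hval t ht).le
        have h2 : (0:ℝ) ≤ (validT 0 p).sup' (validT_nonempty 0 p hp) (Fm S A 0 p) := by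
          obtain ⟨t, ht⟩ := validT_nonempty 0 p hp
          exact (hval t ht).symm.le.trans (Finset.le_sup' _ ht)
        simp [le_antisymm h1 h2]
    | succ m' ih =>
        intro hm' p hp
        have ihm := ih (by omega)
        have hmem : m' + 1 ∈ Finset.Icc 1 m := Finset.mem_Icc.mpr ⟨by omega, hm'⟩
        rw [Finset.sum_Icc_succ_top (by omega : 1 ≤ m' + 1) (fun i => D i p),
          hD (m' + 1) hmem p hp]
        set E : ℝ := ∑ i ∈ Finset.Icc 1 m', D i p with hE
        -- value of the inner Lindley term
        have hterm : ∀ j ∈ Finset.Icc 1 p,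
            (∑ k ∈ Finset.Icc j p, (S (m' + 1) k + S (m' + 1 + 1) k))
              - τ (m' + 1) (j + 1) p
            = ((∑ k ∈ Finset.Icc j p, (S (m' + 1) k + S (m' + 2) k))
                - ∑ k ∈ Finset.Icc (j + 1) p, A k)
              - E + ∑ r ∈ Finset.Icc 1 m', D r j := by
          intro j hj
          obtain ⟨hj1, hjp⟩ := Finset.mem_Icc.mp hj
          rw [telescope m' (by omega) j p hj1 hjp]
          rw [hE]; ring
        apply le_antisymm
        · -- ≤ direction
          have key : (Finset.Icc 1 p).sup' (Finset.nonempty_Icc.mpr hp)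
              (fun j => (∑ k ∈ Finset.Icc j p, (S (m' + 1) k + S (m' + 1 + 1) k))
                - τ (m' + 1) (j + 1) p)
              ≤ (validT (m' + 1) p).sup' (validT_nonempty (m' + 1) p hp)
                  (Fm S A (m' + 1) p) - E := by
            apply Finset.sup'_le
            intro j hj
            obtain ⟨hj1, hjp⟩ := Finset.mem_Icc.mp hj
            rw [hterm j hj, ihm j hj1]
            have key2 : (validT m' j).sup' (validT_nonempty m' j hj1) (Fm S A m' j)
                ≤ (validT (m' + 1) p).sup' (validT_nonempty (m' + 1) p hp)
                    (Fm S A (m' + 1) p)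
                  - ((∑ k ∈ Finset.Icc j p, (S (m' + 1) k + S (m' + 2) k))
                      - ∑ k ∈ Finset.Icc (j + 1) p, A k) := by
              apply Finset.sup'_le
              intro t ht
              obtain ⟨hmono, h0, hl⟩ := mem_validT.mp ht
              have hmem2 : (Fin.snoc t p : Fin (m' + 2) → ℕ) ∈ validT (m' + 1) p := by
                refine mem_validT.mpr ⟨monotone_snoc hmono (hl ▸ hjp), ?_, Fin.snoc_last _ _⟩
                rw [snoc_zero']; exact h0
              have := Finset.le_sup' (Fm S A (m' + 1) p) hmem2
              rw [Fm_snoc S A t (hl ▸ hmono (Fin.zero_le _)) hl hjp] at this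
              linarith
            linarith
          linarith
        · -- ≥ direction
          apply Finset.sup'_le
          intro t' ht'
          obtain ⟨hmono, h0, hl⟩ := mem_validT.mp ht'
          set j : ℕ := t' (Fin.last m').castSucc with hjdef
          have hj1 : 1 ≤ j := h0.trans (hmono (Fin.zero_le _))
          have hjp : j ≤ p := hl ▸ hmono (Fin.le_last _)
          set t : Fin (m' + 1) → ℕ := Fin.init t' with htdef
          have htmono : Monotone t := hmono.comp Fin.strictMono_castSucc.monotone
          have ht0 : t 0 = t' 0 := by simp [htdef, Fin.init]
          have htl : t (Fin.last m') = j := rfl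
          have htmem : t ∈ validT m' j := mem_validT.mpr ⟨htmono, ht0 ▸ h0, htl⟩
          have ht' : t' = Fin.snoc t p := by
            rw [htdef, ← hl, Fin.snoc_init_self]
          have hFt' : Fm S A (m' + 1) p t' = Fm S A m' j t
              + ((∑ k ∈ Finset.Icc j p, (S (m' + 1) k + S (m' + 2) k))
                  - ∑ k ∈ Finset.Icc (j + 1) p, A k) := by
            rw [ht']
            exact Fm_snoc S A t (htl ▸ htmono (Fin.zero_le _)) htl hjp
          have h1 : Fm S A m' j t
              ≤ (validT m' j).sup' (validT_nonempty m' j hj1) (Fm S A m' j) :=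
            Finset.le_sup' _ htmem
          rw [← ihm j hj1] at h1
          have hjmem : j ∈ Finset.Icc 1 p := Finset.mem_Icc.mpr ⟨hj1, hjp⟩
          have h2 :
              (∑ k ∈ Finset.Icc j p, (S (m' + 1) k + S (m' + 1 + 1) k))
                - τ (m' + 1) (j + 1) p
              ≤ (Finset.Icc 1 p).sup' (Finset.nonempty_Icc.mpr hp)
                  (fun j => (∑ k ∈ Finset.Icc j p, (S (m' + 1) k + S (m' + 1 + 1) k))
                    - τ (m' + 1) (j + 1) p) :=
            Finset.le_sup' (fun j => (∑ k ∈ Finset.Icc j p, (S (m' + 1) k + S (m' + 1 + 1) k))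
                    - τ (m' + 1) (j + 1) p) hjmem
          rw [hterm j hjmem] at h2
          linarith
  -- assemble
  have hset : {x : ℝ | ∃ j : Fin (m + 1) → ℕ, Monotone j ∧ 1 ≤ j 0 ∧ j (Fin.last m) = n ∧
        x = (∑ i : Fin m, ∑ k ∈ Finset.Icc (j i.castSucc) (j i.succ),
              (S (i.val + 1) k + S (i.val + 2) k))
          - ∑ k ∈ Finset.Icc (j 0 + 1) n, A k}
      = ↑((validT m n).image (Fm S A m n)) := by
    ext x
    simp only [Set.mem_setOf_eq, Finset.coe_image, Set.mem_image, Finset.mem_coe]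
    constructor
    · rintro ⟨j, h1, h2, h3, h4⟩
      exact ⟨j, mem_validT.mpr ⟨h1, h2, h3⟩, h4.symm⟩
    · rintro ⟨j, hj, h4⟩
      obtain ⟨h1, h2, h3⟩ := mem_validT.mp hj
      exact ⟨j, h1, h2, h3, h4.symm⟩
  rw [hset, Finset.coe_image,
    ← Finset.sup'_eq_csSup_image (validT m n) (validT_nonempty m n hn) (Fm S A m n)]
  exact main m le_rfl n hn
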